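/- Let a, b ∈ ℝ with a ≥ 0 and let α, β ∈ (0,1). Suppose u : [0,T] → [0,∞) is bounded and measurable and satisfies u(t) ≤ a + b ∫_0^t ( (t-s)^{α-1} + (t-s)^{β-1} ) u(s) ds for all t ∈ [0,T]. If a = 0 then u(t) = 0 for all t ∈ [0,T]. -/
import Mathlib


open MeasureTheory Real intervalIntegral

lemma aux_kernel_int {γ t c : ℝ} (hγ : 0 < γ) :
    (∫ s in c..t, (t - s) ^ (γ - 1)) = (t - c) ^ γ / γ := by
  have h1 : (∫ s in c..t, (t - s) ^ (γ - 1)) = ∫ x in (t - t)..(t - c), x ^ (γ - 1) :=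
    intervalIntegral.integral_comp_sub_left (fun x => x ^ (γ - 1)) t
  have h2 : γ - 1 + 1 = γ := by ring
  rw [h1, sub_self, integral_rpow (Or.inl (by linarith)), h2,
    Real.zero_rpow hγ.ne', sub_zero]

lemma aux_kernel_intble {γ : ℝ} (t c d : ℝ) (hγ : 0 < γ) :
    IntervalIntegrable (fun s => (t - s) ^ (γ - 1)) volume c d := by
  have h := (intervalIntegrable_rpow' (a := t - c) (b := t - d) (r := γ - 1)
    (by linarith)).comp_sub_left t
  simpa using h

theorem stmt_13 (T a b α β : ℝ) (hT : 0 < T) (ha : 0 ≤ a)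
    (hα : 0 < α ∧ α < 1) (hβ : 0 < β ∧ β < 1)
    (u : ℝ → ℝ) (hu_meas : Measurable u)
    (hu_nonneg : ∀ t ∈ Set.Icc (0:ℝ) T, 0 ≤ u t)
    (hu_bdd : ∃ M : ℝ, ∀ t ∈ Set.Icc (0:ℝ) T, u t ≤ M)
    (hineq : ∀ t ∈ Set.Icc (0:ℝ) T,
      u t ≤ a + b * ∫ s in (0:ℝ)..t, ((t - s) ^ (α - 1) + (t - s) ^ (β - 1)) * u s)
    (ha0 : a = 0) :
    ∀ t ∈ Set.Icc (0:ℝ) T, u t = 0 := by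
  subst ha0
  obtain ⟨M0, hM0⟩ := hu_bdd
  set M : ℝ := max M0 0 with hMdef
  have hMnn : 0 ≤ M := le_max_right _ _
  have hM' : ∀ t ∈ Set.Icc (0:ℝ) T, u t ≤ M := fun t ht => (hM0 t ht).trans (le_max_left _ _)
  -- kernel notation
  set K : ℝ → ℝ → ℝ := fun t s => (t - s) ^ (α - 1) + (t - s) ^ (β - 1) with hKdef
  have hKnonneg : ∀ t s : ℝ, s ≤ t → 0 ≤ K t s := by
    intro t s hst
    exact add_nonneg (Real.rpow_nonneg (by linarith) _) (Real.rpow_nonneg (by linarith) _)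
  have hKint : ∀ t c d : ℝ, IntervalIntegrable (fun s => K t s) volume c d :=
    fun t c d => (aux_kernel_intble t c d hα.1).add (aux_kernel_intble t c d hβ.1)
  have hKmeas : ∀ t : ℝ, Measurable fun s => K t s * u s := by
    intro t
    exact (((measurable_const.sub measurable_id).pow_const _).add
      ((measurable_const.sub measurable_id).pow_const _)).mul hu_meas
  -- integrability of K * u on subintervals of [0, t] with t ≤ T
  have hKu_int : ∀ t c d : ℝ, 0 ≤ c → c ≤ d → d ≤ t → t ≤ T →
      IntervalIntegrable (fun s => K t s * u s) volume c d := by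
    intro t c d hc hcd hdt htT
    apply IntervalIntegrable.mono_fun' ((hKint t c d).mul_const M)
      ((hKmeas t).aestronglyMeasurable)
    refine (ae_restrict_iff' measurableSet_uIoc).2 (Filter.Eventually.of_forall fun s hs => ?_)
    rw [Set.uIoc_of_le hcd] at hs
    have hs0 : (0:ℝ) ≤ s := hc.trans hs.1.le
    have hst : s ≤ t := hs.2.trans hdt
    have hsT : s ∈ Set.Icc (0:ℝ) T := ⟨hs0, hst.trans htT⟩
    have h1 : 0 ≤ K t s := hKnonneg t s hst
    have h2 : 0 ≤ u s := hu_nonneg s hsT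
    show ‖K t s * u s‖ ≤ K t s * M
    rw [Real.norm_eq_abs, abs_mul, abs_of_nonneg h1, abs_of_nonneg h2]
    exact mul_le_mul_of_nonneg_left (hM' s hsT) h1
  -- nonnegativity of the integral
  have hInt_nonneg : ∀ t ∈ Set.Icc (0:ℝ) T, 0 ≤ ∫ s in (0:ℝ)..t, K t s * u s := by
    intro t ht
    apply intervalIntegral.integral_nonneg ht.1
    intro s hs
    exact mul_nonneg (hKnonneg t s hs.2) (hu_nonneg s ⟨hs.1, hs.2.trans ht.2⟩)
  rcases le_or_gt b 0 with hb | hb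
  · -- b ≤ 0 : trivial
    intro t ht
    have h := hineq t ht
    rw [zero_add] at h
    have : u t ≤ 0 := h.trans (mul_nonpos_of_nonpos_of_nonneg hb (hInt_nonneg t ht))
    exact le_antisymm this (hu_nonneg t ht)
  -- b > 0
  -- key contraction estimate
  have key : ∀ B : ℝ, 0 ≤ B → ∀ c t : ℝ, 0 ≤ c → c ≤ t → t ≤ T →
      (∀ s ∈ Set.Icc (0:ℝ) c, u s = 0) → (∀ s ∈ Set.Icc c t, u s ≤ B) →
      u t ≤ B * (b * ((t - c) ^ α / α + (t - c) ^ β / β)) := by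
    intro B hB c t hc hct htT hzero hbd
    have ht0 : (0:ℝ) ≤ t := hc.trans hct
    have h := hineq t ⟨ht0, htT⟩
    rw [zero_add] at h
    have hsplit : (∫ s in (0:ℝ)..t, K t s * u s) =
        (∫ s in (0:ℝ)..c, K t s * u s) + ∫ s in c..t, K t s * u s :=
      (intervalIntegral.integral_add_adjacent_intervals
        (hKu_int t 0 c (le_refl 0) hc hct htT)
        (hKu_int t c t hc hct (le_refl t) htT)).symm
    have hfirst : (∫ s in (0:ℝ)..c, K t s * u s) = 0 := by
      have heq : (∫ s in (0:ℝ)..c, K t s * u s) = ∫ s in (0:ℝ)..c, (0:ℝ) := by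
        apply intervalIntegral.integral_congr
        intro s hs
        rw [Set.uIcc_of_le hc] at hs
        show K t s * u s = 0
        rw [hzero s hs, mul_zero]
      simpa using heq
    have hsecond : (∫ s in c..t, K t s * u s) ≤ B * ((t - c) ^ α / α + (t - c) ^ β / β) := by
      have hmono : (∫ s in c..t, K t s * u s) ≤ ∫ s in c..t, K t s * B := by
        apply intervalIntegral.integral_mono_on hct
          (hKu_int t c t hc hct (le_refl t) htT) ((hKint t c t).mul_const B)
        intro s hs
        exact mul_le_mul_of_nonneg_left (hbd s hs) (hKnonneg t s hs.2)
      have hval : (∫ s in c..t, K t s * B) = ((t - c) ^ α / α + (t - c) ^ β / β) * B := by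
        rw [intervalIntegral.integral_mul_const]
        congr 1
        rw [hKdef]
        rw [intervalIntegral.integral_add (aux_kernel_intble t c t hα.1)
          (aux_kernel_intble t c t hβ.1), aux_kernel_int hα.1, aux_kernel_int hβ.1]
      rw [hval, mul_comm] at hmono
      exact hmono
    calc u t ≤ b * ∫ s in (0:ℝ)..t, K t s * u s := h
      _ = b * ∫ s in c..t, K t s * u s := by rw [hsplit, hfirst, zero_add]
      _ ≤ b * (B * ((t - c) ^ α / α + (t - c) ^ β / β)) :=
          mul_le_mul_of_nonneg_left hsecond hb.le
      _ = B * (b * ((t - c) ^ α / α + (t - c) ^ β / β)) := by ring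
  -- choose δ with contraction factor ≤ 1/2
  have hcont : Filter.Tendsto (fun x : ℝ => b * (x ^ α / α + x ^ β / β)) (nhds 0) (nhds 0) := by
    have h1 : ContinuousAt (fun x : ℝ => b * (x ^ α / α + x ^ β / β)) 0 :=
      continuousAt_const.mul
        (((Real.continuousAt_rpow_const 0 α (Or.inr hα.1.le)).div_const _).add
          ((Real.continuousAt_rpow_const 0 β (Or.inr hβ.1.le)).div_const _))
    have h2 : b * ((0:ℝ) ^ α / α + (0:ℝ) ^ β / β) = 0 := by
      rw [Real.zero_rpow hα.1.ne', Real.zero_rpow hβ.1.ne']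
      ring
    simpa [ContinuousAt, h2] using h1
  obtain ⟨δ0, hδ0, hδprop⟩ := Metric.tendsto_nhds_nhds.1 hcont (1/2) (by norm_num)
  set δ : ℝ := δ0 / 2 with hδdef
  have hδpos : 0 < δ := by positivity
  have hfactor : ∀ x : ℝ, 0 ≤ x → x ≤ δ → b * (x ^ α / α + x ^ β / β) ≤ 1 / 2 := by
    intro x hx hxδ
    have hd : dist x 0 < δ0 := by
      rw [Real.dist_eq, sub_zero, abs_of_nonneg hx]
      have : δ < δ0 := by rw [hδdef]; linarith
      linarith
    have := hδprop hd
    rw [Real.dist_eq, sub_zero] at this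
    exact (le_abs_self _).trans this.le
  -- outer induction
  have main : ∀ n : ℕ, ∀ t ∈ Set.Icc (0:ℝ) T, t ≤ (n : ℝ) * δ → u t = 0 := by
    intro n
    induction n with
    | zero =>
      intro t ht h0
      have ht0 : t = 0 := le_antisymm (by simpa using h0) ht.1
      subst ht0
      have h := hineq 0 ⟨le_refl 0, hT.le⟩
      simp only [intervalIntegral.integral_same, mul_zero, add_zero, zero_add] at h
      exact le_antisymm h (hu_nonneg 0 ⟨le_refl 0, hT.le⟩)
    | succ n ih =>
      intro t ht htn
      push_cast at htn
      -- inner contraction induction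
      have inner : ∀ m : ℕ, ∀ t ∈ Set.Icc (0:ℝ) T, t ≤ ((n : ℝ) + 1) * δ →
          u t ≤ M / 2 ^ m := by
        intro m
        induction m with
        | zero => intro t ht _; simpa using hM' t ht
        | succ m ihm =>
          intro t ht htn
          set c : ℝ := min ((n : ℝ) * δ) t with hcdef
          have hc0 : 0 ≤ c := le_min (by positivity) ht.1
          have hct : c ≤ t := min_le_right _ _
          have hzero : ∀ s ∈ Set.Icc (0:ℝ) c, u s = 0 := fun s hs =>
            ih s ⟨hs.1, (hs.2.trans (hct.trans ht.2))⟩ (hs.2.trans (min_le_left _ _))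
          have hbd : ∀ s ∈ Set.Icc c t, u s ≤ M / 2 ^ m := fun s hs =>
            ihm s ⟨hc0.trans hs.1, hs.2.trans ht.2⟩ (hs.2.trans htn)
          have hkey := key (M / 2 ^ m) (by positivity) c t hc0 hct ht.2 hzero hbd
          have htc1 : 0 ≤ t - c := by linarith
          have htc2 : t - c ≤ δ := by
            have h1 : t - δ ≤ (n : ℝ) * δ := by linarith
            have h2 : t - δ ≤ t := by linarith
            have : t - δ ≤ c := le_min h1 h2
            linarith
          calc u t ≤ (M / 2 ^ m) * (b * ((t - c) ^ α / α + (t - c) ^ β / β)) := hkey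
            _ ≤ (M / 2 ^ m) * (1 / 2) :=
                mul_le_mul_of_nonneg_left (hfactor _ htc1 htc2) (by positivity)
            _ = M / 2 ^ (m + 1) := by ring
      have hto : Filter.Tendsto (fun m : ℕ => M / 2 ^ m) Filter.atTop (nhds 0) := by
        have := (tendsto_pow_atTop_nhds_zero_of_lt_one
          (by norm_num : (0:ℝ) ≤ 1 / 2) (by norm_num : (1:ℝ) / 2 < 1)).const_mul M
        rw [mul_zero] at this
        convert this using 2 with m
        rw [div_pow, one_pow, div_eq_mul_inv, div_eq_mul_inv, one_mul]
      have hle : u t ≤ 0 :=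
        ge_of_tendsto hto (Filter.Eventually.of_forall fun m => inner m t ht htn)
      exact le_antisymm hle (hu_nonneg t ht)
  intro t ht
  obtain ⟨n, hn⟩ := exists_nat_ge (T / δ)
  have hTn : T ≤ (n : ℝ) * δ := by
    rw [div_le_iff₀ hδpos] at hn
    linarith
  exact main n t ht (ht.2.trans hTn)
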